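/- arXiv:1712.10146 — 8 statements merged into one kernel-verified Lean document; each statement's English description precedes it below -/
import Mathlib

section
/- Let A be a commutative ring, let X be a cochain complex of A-modules, and let a ∈ A. Let m_a : X → X be the morphism of complexes given in every degree by multiplication by a. Then a annihilates every cohomology module of the mapping cone of m_a; that is, for every i ∈ ℤ, multiplication by a is the zero endomorphism of H^i(Cone(m_a)). -/
open CategoryTheory

namespace HomologicalComplex

variable {R : Type*} [Semiring R] {C : Type*} [Category C] [Preadditive C]
  [CategoryTheory.Linear R C] {ι : Type*} {c : ComplexShape ι}
  {K L : HomologicalComplex C c}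

lemma homologyMap_smul' (f : K ⟶ L) (r : R) (i : ι) [K.HasHomology i] [L.HasHomology i] :
    homologyMap (r • f) i = r • homologyMap f i := by
  have : (shortComplexFunctor C c i).map (r • f) = r • (shortComplexFunctor C c i).map f := by
    ext <;> rfl
  rw [homologyMap, this, ShortComplex.homologyMap_smul]
  rfl

end HomologicalComplex

open CochainComplex HomComplex mappingCone in
noncomputable def coneSmulHomotopy {A : Type} [CommRing A]
    (X : CochainComplex (ModuleCat A) ℤ) (a : A) :
    Homotopy (a • 𝟙 (CochainComplex.mappingCone ((a • 𝟙 X : X ⟶ X)))) 0 where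
  hom i j :=
    if hij : j + 1 = i then
      (snd (a • 𝟙 X)).v i i (add_zero i) ≫ (inl (a • 𝟙 X)).v i j (by omega)
    else 0
  zero i j h := dif_neg h
  comm i := by
    set φ : X ⟶ X := a • 𝟙 X with hφ
    rw [dNext_eq _ (show (ComplexShape.up ℤ).Rel i (i+1) by simp),
      prevD_eq _ (show (ComplexShape.up ℤ).Rel (i-1) i by simp)]
    dsimp
    rw [dif_pos (by omega), dif_pos (by omega)]
    refine ext_from φ (i + 1) i rfl ?_ ?_
    · simp only [Category.assoc]
      rw [Preadditive.comp_add, Preadditive.comp_add, Limits.comp_zero,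
        inl_v_d_assoc φ (i+1) i (i+2) (by omega) (by omega)]
      simp [φ]
    · simp only [Category.assoc]
      rw [Preadditive.comp_add, Preadditive.comp_add, Limits.comp_zero,
        inr_f_snd_v_assoc φ i ((inl φ).v i (i - 1) (by omega) ≫ (mappingCone φ).d (i - 1) i),
        inl_v_d φ i (i-1) (i+1) (by omega) (by omega)]
      simp [φ]

set_option synthInstance.maxHeartbeats 1000000 in
set_option maxHeartbeats 1000000 in
/-- Multiplication by `a` annihilates the cohomology of the mapping cone of the
multiplication-by-`a` endomorphism of a cochain complex of `A`-modules. -/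
theorem mul_self_cone_cohomology_smul_eq_zero
    {A : Type} [CommRing A] (X : CochainComplex (ModuleCat A) ℤ) (a : A) (i : ℤ) :
    a • 𝟙 ((CochainComplex.mappingCone
      ((a • 𝟙 X : X ⟶ X))).homology i) = 0 := by
  have h := (coneSmulHomotopy X a).homologyMap_eq i
  rw [HomologicalComplex.homologyMap_smul', HomologicalComplex.homologyMap_id,
    HomologicalComplex.homologyMap_zero] at h
  exact h
end

section
/- Let A be a commutative Noetherian ring, 𝔮 ⊆ A an ideal, M a finitely generated A-module, c ≥ 1 an integer, a ∈ 𝔮^c, and n ∈ ℕ. In the localized module M_a (the localization of M at the multiplicative set of powers of a), for each k ≥ 0 let S_k be the A-submodule of M_a generated by the elements x/a^k with x ∈ 𝔮^{n+kc}M, and let T_k be the A-submodule of M_a generated by the elements x/a^k with x ∈ (𝔮^c)^k M. Then ⨆_{k≥0} S_k = 𝔮^n · (⨆_{k≥0} T_k). -/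
/-- The A-linear map `x ↦ x / a^k` from `M` to `M_a`. -/
noncomputable def mkDenomLinearMap {A : Type} [CommRing A] {M : Type} [AddCommGroup M]
    [Module A M] (a : A) (k : ℕ) :
    M →ₗ[A] LocalizedModule (Submonoid.powers a) M where
  toFun x := LocalizedModule.mk x ⟨a ^ k, pow_mem (Submonoid.mem_powers a) k⟩
  map_add' x y := by
    rw [LocalizedModule.mk_add_mk, ← smul_add, LocalizedModule.mk_cancel_common_left]
  map_smul' r x := by
    simp [LocalizedModule.smul'_mk]

theorem span_mk_eq_map {A : Type} [CommRing A] {M : Type} [AddCommGroup M]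
    [Module A M] (a : A) (k : ℕ) (N : Submodule A M) :
    Submodule.span A
      { y : LocalizedModule (Submonoid.powers a) M |
        ∃ x ∈ N, y = LocalizedModule.mk x ⟨a ^ k, pow_mem (Submonoid.mem_powers a) k⟩ } =
    N.map (mkDenomLinearMap a k) := by
  rw [← Submodule.span_eq (N.map (mkDenomLinearMap a k)), Submodule.map_coe]
  congr 1
  ext y
  simp only [Set.mem_setOf_eq, Set.mem_image, SetLike.mem_coe]
  constructor
  · rintro ⟨x, hx, rfl⟩; exact ⟨x, hx, rfl⟩
  · rintro ⟨x, hx, rfl⟩; exact ⟨x, hx, rfl⟩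

/-- The direct limit of the system `{𝔮^{n+kc}M, ·a}`, realized inside `M_a` as the union of
the submodules `S_k` generated by the `x/a^k` with `x ∈ 𝔮^{n+kc}M`, equals
`𝔮^n · M[𝔮^c/a]`, where `M[𝔮^c/a] = ⨆_k T_k` with `T_k` generated by the `x/a^k`
with `x ∈ (𝔮^c)^k M`. -/
theorem sup_span_mk_eq_smul_sup_span_mk
    {A : Type} [CommRing A] [IsNoetherianRing A] (𝔮 : Ideal A)
    {M : Type} [AddCommGroup M] [Module A M] [Module.Finite A M]
    (c : ℕ) (hc : 1 ≤ c) (a : A) (ha : a ∈ 𝔮 ^ c) (n : ℕ) :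
    (⨆ k : ℕ, Submodule.span A
      { y : LocalizedModule (Submonoid.powers a) M |
        ∃ x ∈ (𝔮 ^ (n + k * c) • (⊤ : Submodule A M)),
          y = LocalizedModule.mk x ⟨a ^ k, pow_mem (Submonoid.mem_powers a) k⟩ }) =
    𝔮 ^ n • (⨆ k : ℕ, Submodule.span A
      { y : LocalizedModule (Submonoid.powers a) M |
        ∃ x ∈ ((𝔮 ^ c) ^ k • (⊤ : Submodule A M)),
          y = LocalizedModule.mk x ⟨a ^ k, pow_mem (Submonoid.mem_powers a) k⟩ }) := by
  rw [Submodule.smul_iSup]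
  apply iSup_congr
  intro k
  rw [span_mk_eq_map, span_mk_eq_map, ← Submodule.map_smul'', ← Submodule.smul_assoc]
  congr 2
  rw [smul_eq_mul, ← pow_mul, ← pow_add, mul_comm c k]
end

section
/- Let A be a commutative Noetherian ring, 𝔮 ⊆ A an ideal, M a finitely generated A-module, c ≥ 1 an integer, and a ∈ 𝔮^c an element that is a nonzerodivisor on M. Assume there exists an integer k such that (𝔮^{n+1+c}M :_M a) ∩ 𝔮^nM ⊆ 𝔮^{n+1}M for all n ≥ k. Then there exists an integer N such that aM ∩ 𝔮^{n+c}M = a·(𝔮^nM) for all n ≥ N. -/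
/-- If `a ∈ 𝔮^c` is a nonzerodivisor on `M` whose initial form avoids the relevant associated
primes of `G_M(𝔮)` (elementary form: `(𝔮^{n+1+c}M :_M a) ∩ 𝔮^nM ⊆ 𝔮^{n+1}M` for all large
`n`), then `aM ∩ 𝔮^{n+c}M = a·(𝔮^nM)` for all large `n`. -/
theorem smul_inter_pow_smul_eq_of_initial_form_regular
    {A M : Type} [CommRing A] [IsNoetherianRing A] [AddCommGroup M] [Module A M]
    [Module.Finite A M] (𝔮 : Ideal A) (c : ℕ) (hc : 1 ≤ c) (a : A) (ha : a ∈ 𝔮 ^ c)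
    (hreg : ∀ m : M, a • m = 0 → m = 0)
    (h : ∃ k : ℕ, ∀ n ≥ k,
      Submodule.comap (a • (LinearMap.id : M →ₗ[A] M)) (𝔮 ^ (n + 1 + c) • ⊤) ⊓
        (𝔮 ^ n • ⊤) ≤ 𝔮 ^ (n + 1) • ⊤) :
    ∃ N : ℕ, ∀ n ≥ N,
      Submodule.map (a • (LinearMap.id : M →ₗ[A] M)) ⊤ ⊓ (𝔮 ^ (n + c) • ⊤) =
        Submodule.map (a • (LinearMap.id : M →ₗ[A] M)) (𝔮 ^ n • ⊤) := by
  obtain ⟨k, hk⟩ := h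
  obtain ⟨k₀, hAR⟩ := Ideal.exists_pow_inf_eq_pow_smul 𝔮
    (Submodule.map (a • (LinearMap.id : M →ₗ[A] M)) ⊤)
  refine ⟨k + k₀, fun n hn => le_antisymm ?_ ?_⟩
  · rintro x ⟨hx1, hx2⟩
    have hmem : x ∈ 𝔮 ^ (n + c) • (⊤ : Submodule A M) ⊓
        Submodule.map (a • (LinearMap.id : M →ₗ[A] M)) ⊤ := ⟨hx2, hx1⟩
    rw [hAR (n + c) (by omega)] at hmem
    have hmem2 : x ∈ 𝔮 ^ (n + c - k₀) •
        Submodule.map (a • (LinearMap.id : M →ₗ[A] M)) ⊤ :=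
      Submodule.smul_mono le_rfl inf_le_right hmem
    rw [← Submodule.map_smul''] at hmem2
    obtain ⟨m, hm, hax⟩ := hmem2
    have hax' : a • m = x := by simpa using hax
    have key : ∀ i : ℕ, m ∈ 𝔮 ^ (min (n + c - k₀ + i) n) • (⊤ : Submodule A M) := by
      intro i
      induction i with
      | zero =>
        exact Submodule.smul_mono
          (Ideal.pow_le_pow_right (by omega : min (n + c - k₀ + 0) n ≤ n + c - k₀))
          le_rfl hm
      | succ i ih =>
        by_cases h' : n ≤ n + c - k₀ + i
        · have : min (n + c - k₀ + (i + 1)) n = min (n + c - k₀ + i) n := by omega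
          rw [this]; exact ih
        · have hj : min (n + c - k₀ + i) n = n + c - k₀ + i := by omega
          rw [hj] at ih
          have hstep := hk (n + c - k₀ + i) (by omega)
          have hx : m ∈ Submodule.comap (a • (LinearMap.id : M →ₗ[A] M))
              (𝔮 ^ (n + c - k₀ + i + 1 + c) • (⊤ : Submodule A M)) := by
            simp only [Submodule.mem_comap, LinearMap.smul_apply, LinearMap.id_apply]
            rw [hax']
            exact Submodule.smul_mono
              (Ideal.pow_le_pow_right (by omega : n + c - k₀ + i + 1 + c ≤ n + c))
              le_rfl hx2
          have : min (n + c - k₀ + (i + 1)) n = n + c - k₀ + i + 1 := by omega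
          rw [this]
          exact hstep ⟨hx, ih⟩
    have hmn : m ∈ 𝔮 ^ n • (⊤ : Submodule A M) := by
      have := key n
      rwa [min_eq_right (by omega)] at this
    exact ⟨m, hmn, hax⟩
  · rintro x ⟨m, hm, rfl⟩
    refine ⟨⟨m, trivial, rfl⟩, ?_⟩
    have : a • m ∈ 𝔮 ^ c • (𝔮 ^ n • (⊤ : Submodule A M)) :=
      Submodule.smul_mem_smul ha hm
    rw [← Submodule.smul_assoc, smul_eq_mul, ← pow_add, add_comm c n] at this
    simpa using this
end

section
/- Let A be a commutative Noetherian ring, 𝔮 ⊆ A an ideal, M a finitely generated A-module, c ≥ 1 an integer, and a ∈ 𝔮^c. Then the following conditions are equivalent: (i) there exists an integer k such that (𝔮^{n+1+c}M :_M a) ∩ 𝔮^nM ⊆ 𝔮^{n+1}M for all n ≥ k; (ii) there exist integers l, k such that (𝔮^{n+c}M :_M a) ∩ 𝔮^lM = 𝔮^nM for all n ≥ k. -/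
/-- For `a ∈ 𝔮^c`, the condition `(𝔮^{n+1+c}M :_M a) ∩ 𝔮^nM ⊆ 𝔮^{n+1}M` for all large `n`
is equivalent to the existence of integers `l, k` with
`(𝔮^{n+c}M :_M a) ∩ 𝔮^lM = 𝔮^nM` for all `n ≥ k`. -/
theorem initial_form_superficial_iff
    {A M : Type} [CommRing A] [IsNoetherianRing A] [AddCommGroup M] [Module A M]
    [Module.Finite A M] (𝔮 : Ideal A) (c : ℕ) (hc : 1 ≤ c) (a : A) (ha : a ∈ 𝔮 ^ c) :
    (∃ k : ℕ, ∀ n ≥ k,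
      Submodule.comap (a • (LinearMap.id : M →ₗ[A] M)) (𝔮 ^ (n + 1 + c) • ⊤) ⊓
        (𝔮 ^ n • ⊤) ≤ 𝔮 ^ (n + 1) • ⊤) ↔
    (∃ l k : ℕ, ∀ n ≥ k,
      Submodule.comap (a • (LinearMap.id : M →ₗ[A] M)) (𝔮 ^ (n + c) • ⊤) ⊓
        (𝔮 ^ l • ⊤) = 𝔮 ^ n • ⊤) := by
  set C : ℕ → Submodule A M :=
    fun n => Submodule.comap (a • (LinearMap.id : M →ₗ[A] M)) (𝔮 ^ (n + c) • ⊤) with hC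
  have hCmono : ∀ {m n : ℕ}, m ≤ n → C n ≤ C m := by
    intro m n h
    exact Submodule.comap_mono
      (Submodule.smul_mono_left (Ideal.pow_le_pow_right (by omega)))
  have hQle : ∀ {m n : ℕ}, m ≤ n → (𝔮 ^ n • ⊤ : Submodule A M) ≤ 𝔮 ^ m • ⊤ :=
    fun h => Submodule.smul_mono_left (Ideal.pow_le_pow_right h)
  have hQC : ∀ n, (𝔮 ^ n • ⊤ : Submodule A M) ≤ C n := by
    intro n x hx
    simp only [hC, Submodule.mem_comap, LinearMap.smul_apply, LinearMap.id_apply]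
    have h1 : a • x ∈ 𝔮 ^ c • (𝔮 ^ n • (⊤ : Submodule A M)) := Submodule.smul_mem_smul ha hx
    rwa [← Submodule.smul_assoc, smul_eq_mul, ← pow_add, add_comm] at h1
  constructor
  · rintro ⟨k, hk⟩
    refine ⟨k, k, fun n hn => le_antisymm ?_ (le_inf (hQC n) (hQle hn))⟩
    induction n, hn using Nat.le_induction with
    | base => exact inf_le_right
    | succ n hn ih =>
      intro x hx
      have hxn : x ∈ (𝔮 ^ n • ⊤ : Submodule A M) :=
        ih ⟨hCmono (Nat.le_succ n) hx.1, hx.2⟩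
      exact hk n hn ⟨hx.1, hxn⟩
  · rintro ⟨l, k, hlk⟩
    refine ⟨k + l, fun n hn => ?_⟩
    calc C (n + 1) ⊓ (𝔮 ^ n • ⊤) ≤ C (n + 1) ⊓ (𝔮 ^ l • ⊤) :=
          inf_le_inf_left _ (hQle (by omega))
      _ = 𝔮 ^ (n + 1) • ⊤ := hlk (n + 1) (by omega)
end

section
/- Let A be a commutative Noetherian ring, 𝔮 ⊆ A an ideal, M a finitely generated A-module, c ≥ 1 an integer, a ∈ 𝔮^c, and n ≥ 1. In the localized module M_a, for each k ≥ 0 let T_k be the A-submodule of M_a generated by the elements x/a^k with x ∈ (𝔮^c)^kM, and set M[𝔮^c/a] = ⨆_{k≥0} T_k. Then the preimage of the submodule 𝔮^n·M[𝔮^c/a] under the canonical map M → M_a equals ⨆_{l≥0} (𝔮^n(𝔮^c)^lM :_M a^l). -/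
section Aux

variable {A : Type} [CommRing A] {M : Type} [AddCommGroup M] [Module A M]

/-- The linear map `x ↦ x / a^k : M → M_a`. -/
noncomputable def fdivAux (a : A) (k : ℕ) : M →ₗ[A] LocalizedModule (Submonoid.powers a) M where
  toFun x := LocalizedModule.mk x ⟨a ^ k, pow_mem (Submonoid.mem_powers a) k⟩
  map_add' x y := by
    rw [LocalizedModule.mk_add_mk, ← smul_add, LocalizedModule.mk_cancel_common_left]
  map_smul' r x := by simp [LocalizedModule.smul'_mk]

theorem fdivAux_apply (a : A) (k : ℕ) (x : M) :
    fdivAux a k x = LocalizedModule.mk x ⟨a ^ k, pow_mem (Submonoid.mem_powers a) k⟩ := rfl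

end Aux

/-- The preimage in `M` of the submodule `𝔮^n · M[𝔮^c/a]` of `M_a` under the canonical map
`M → M_a` equals `(𝔮^nM)^{aA} = ⨆_l (𝔮^n(𝔮^c)^lM :_M a^l)`. -/
theorem comap_mk_smul_sup_eq_sup_colon
    {A : Type} [CommRing A] [IsNoetherianRing A] (𝔮 : Ideal A)
    {M : Type} [AddCommGroup M] [Module A M] [Module.Finite A M]
    (c : ℕ) (hc : 1 ≤ c) (a : A) (ha : a ∈ 𝔮 ^ c) (n : ℕ) (hn : 1 ≤ n) :
    Submodule.comap (LocalizedModule.mkLinearMap (Submonoid.powers a) M)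
      (𝔮 ^ n • (⨆ k : ℕ, Submodule.span A
        { y : LocalizedModule (Submonoid.powers a) M |
          ∃ x ∈ ((𝔮 ^ c) ^ k • (⊤ : Submodule A M)),
            y = LocalizedModule.mk x ⟨a ^ k, pow_mem (Submonoid.mem_powers a) k⟩ })) =
    ⨆ l : ℕ, Submodule.comap ((a ^ l) • (LinearMap.id : M →ₗ[A] M))
      ((𝔮 ^ n * (𝔮 ^ c) ^ l) • ⊤) := by
  classical
  -- The span defining `T_k` is the image of `(𝔮^c)^k • ⊤` under `fdivAux a k`.
  have hN : ∀ k : ℕ, Submodule.span A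
      { y : LocalizedModule (Submonoid.powers a) M |
        ∃ x ∈ ((𝔮 ^ c) ^ k • (⊤ : Submodule A M)),
          y = LocalizedModule.mk x ⟨a ^ k, pow_mem (Submonoid.mem_powers a) k⟩ } =
      Submodule.map (fdivAux a k) ((𝔮 ^ c) ^ k • (⊤ : Submodule A M)) := by
    intro k
    apply le_antisymm
    · rw [Submodule.span_le]
      rintro y ⟨x, hx, rfl⟩
      exact ⟨x, hx, rfl⟩
    · rintro y ⟨x, hx, rfl⟩
      exact Submodule.subset_span ⟨x, hx, rfl⟩
  -- `𝔮^n • T_k` is the image of `(𝔮^n * (𝔮^c)^k) • ⊤` under `fdivAux a k`.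
  have hQN : ∀ k : ℕ, 𝔮 ^ n • Submodule.map (fdivAux a k) ((𝔮 ^ c) ^ k • (⊤ : Submodule A M)) =
      Submodule.map (fdivAux a k) ((𝔮 ^ n * (𝔮 ^ c) ^ k) • (⊤ : Submodule A M)) := by
    intro k
    rw [← Submodule.map_smul'', ← Submodule.smul_assoc, smul_eq_mul]
  -- monotonicity
  have hmono : Monotone fun k : ℕ =>
      𝔮 ^ n • Submodule.map (fdivAux a k) ((𝔮 ^ c) ^ k • (⊤ : Submodule A M)) := by
    apply monotone_nat_of_le_succ
    intro k
    apply smul_mono_right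
    rintro y ⟨x, hx, rfl⟩
    refine ⟨a • x, ?_, ?_⟩
    · rw [pow_succ', ← smul_eq_mul, Submodule.smul_assoc]
      exact Submodule.smul_mem_smul ha hx
    · rw [fdivAux_apply, fdivAux_apply, LocalizedModule.mk_eq]
      refine ⟨1, ?_⟩
      simp only [one_smul, Submonoid.smul_def, pow_succ, mul_smul]
  apply le_antisymm
  · intro x hx
    simp only [Submodule.mem_comap, LocalizedModule.mkLinearMap_apply] at hx
    simp only [hN] at hx
    rw [Submodule.smul_iSup] at hx
    obtain ⟨k, hk⟩ := (Submodule.mem_iSup_of_directed _ hmono.directed_le).mp hx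
    rw [hQN] at hk
    obtain ⟨z, hz, hzx⟩ := hk
    rw [fdivAux_apply, LocalizedModule.mk_eq] at hzx
    obtain ⟨u, hu⟩ := hzx
    obtain ⟨j, hj⟩ := u.2
    simp only [Submonoid.smul_def, one_smul, OneMemClass.coe_one] at hu
    -- hu : (u : A) • z = (u : A) • a ^ k • x
    have hj' : a ^ j = (u : A) := hj
    have key : a ^ (j + k) • x = a ^ j • z := by
      rw [pow_add, mul_smul, hj', hu]
    refine Submodule.mem_iSup_of_mem (j + k) ?_
    simp only [Submodule.mem_comap, LinearMap.smul_apply, LinearMap.id_apply]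
    rw [key]
    have heq : (𝔮 ^ n * (𝔮 ^ c) ^ (j + k)) • (⊤ : Submodule A M)
        = (𝔮 ^ c) ^ j • ((𝔮 ^ n * (𝔮 ^ c) ^ k) • ⊤) := by
      rw [← Submodule.smul_assoc, smul_eq_mul]
      congr 1
      ring
    rw [heq]
    exact Submodule.smul_mem_smul (Ideal.pow_mem_pow ha j) hz
  · refine iSup_le fun l => ?_
    intro x hx
    simp only [Submodule.mem_comap, LinearMap.smul_apply, LinearMap.id_apply] at hx
    simp only [Submodule.mem_comap, LocalizedModule.mkLinearMap_apply]
    have h1 : (LocalizedModule.mk x 1 : LocalizedModule (Submonoid.powers a) M)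
        = fdivAux a l (a ^ l • x) := by
      rw [fdivAux_apply,
        show (a ^ l • x : M) =
          (⟨a ^ l, pow_mem (Submonoid.mem_powers a) l⟩ : Submonoid.powers a) • x from rfl,
        LocalizedModule.mk_cancel]
    rw [h1]
    have hmem : fdivAux a l (a ^ l • x) ∈
        Submodule.map (fdivAux a l) ((𝔮 ^ n * (𝔮 ^ c) ^ l) • (⊤ : Submodule A M)) := ⟨_, hx, rfl⟩
    rw [← hQN] at hmem
    refine Submodule.smul_mono le_rfl ?_ hmem
    rw [← hN l]
    exact le_iSup (fun k => Submodule.span A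
      { y : LocalizedModule (Submonoid.powers a) M |
        ∃ x ∈ ((𝔮 ^ c) ^ k • (⊤ : Submodule A M)),
          y = LocalizedModule.mk x ⟨a ^ k, pow_mem (Submonoid.mem_powers a) k⟩ }) l
end

section
/- Let A be a commutative Noetherian ring, 𝔮 ⊆ A an ideal, M a finitely generated A-module, c ≥ 1 an integer, and a ∈ 𝔮^c a nonzerodivisor on M. Suppose there exists an integer k such that (𝔮^{n+c}M :_M a) = 𝔮^nM for all n ≥ k. Then for all n ≥ k and all l ≥ 0 one has (𝔮^n(𝔮^c)^lM :_M a^l) = 𝔮^nM; in particular ⨆_{l≥0} (𝔮^n(𝔮^c)^lM :_M a^l) = 𝔮^nM for all n ≥ k. -/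
/-- If `a ∈ 𝔮^c` is a nonzerodivisor on `M` and `(𝔮^{n+c}M :_M a) = 𝔮^nM` for all `n ≥ k`,
then `(𝔮^n(𝔮^c)^lM :_M a^l) = 𝔮^nM` for all `n ≥ k` and `l ≥ 0`; in particular
`(𝔮^nM)^{aA} = ⨆_l (𝔮^n(𝔮^c)^lM :_M a^l) = 𝔮^nM` for all `n ≥ k`. -/
theorem saturation_eq_of_colon_stable
    {A M : Type} [CommRing A] [IsNoetherianRing A] [AddCommGroup M] [Module A M]
    [Module.Finite A M] (𝔮 : Ideal A) (c : ℕ) (hc : 1 ≤ c) (a : A) (ha : a ∈ 𝔮 ^ c)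
    (hreg : ∀ m : M, a • m = 0 → m = 0) (k : ℕ)
    (h : ∀ n ≥ k,
      Submodule.comap (a • (LinearMap.id : M →ₗ[A] M)) (𝔮 ^ (n + c) • ⊤) = 𝔮 ^ n • ⊤) :
    (∀ n ≥ k, ∀ l : ℕ,
      Submodule.comap ((a ^ l) • (LinearMap.id : M →ₗ[A] M))
        ((𝔮 ^ n * (𝔮 ^ c) ^ l) • ⊤) = 𝔮 ^ n • ⊤) ∧
    (∀ n ≥ k,
      (⨆ l : ℕ, Submodule.comap ((a ^ l) • (LinearMap.id : M →ₗ[A] M))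
        ((𝔮 ^ n * (𝔮 ^ c) ^ l) • ⊤)) = 𝔮 ^ n • ⊤) := by
  have key : ∀ l : ℕ, ∀ n ≥ k,
      Submodule.comap ((a ^ l) • (LinearMap.id : M →ₗ[A] M))
        ((𝔮 ^ n * (𝔮 ^ c) ^ l) • ⊤) = 𝔮 ^ n • ⊤ := by
    intro l
    induction l with
    | zero =>
      intro n hn
      ext m
      simp [Submodule.mem_comap]
    | succ l ih =>
      intro n hn
      have h1 := ih (n + c) (le_trans hn (Nat.le_add_right n c))
      have h2 := h n hn
      ext m
      have e1 : (a ^ (l + 1)) • m = (a ^ l) • (a • m) := by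
        rw [pow_succ, mul_smul]
      have e2 : 𝔮 ^ n * (𝔮 ^ c) ^ (l + 1) = 𝔮 ^ (n + c) * (𝔮 ^ c) ^ l := by
        rw [pow_succ, pow_add]
        ring
      simp only [Submodule.mem_comap, LinearMap.smul_apply, LinearMap.id_apply, e1, e2]
      have : (a ^ l) • (a • m) ∈ (𝔮 ^ (n + c) * (𝔮 ^ c) ^ l) • (⊤ : Submodule A M) ↔
          a • m ∈ Submodule.comap ((a ^ l) • (LinearMap.id : M →ₗ[A] M))
            ((𝔮 ^ (n + c) * (𝔮 ^ c) ^ l) • ⊤) := Iff.rfl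
      rw [this, h1]
      have : a • m ∈ (𝔮 ^ (n + c)) • (⊤ : Submodule A M) ↔
          m ∈ Submodule.comap (a • (LinearMap.id : M →ₗ[A] M)) (𝔮 ^ (n + c) • ⊤) := Iff.rfl
      rw [this, h2]
  refine ⟨fun n hn l => key l n hn, fun n hn => ?_⟩
  rw [iSup_congr (fun l => key l n hn)]
  exact iSup_const
end

section
/- Let (A, 𝔪) be a commutative Noetherian local ring, 𝔮 ⊆ 𝔪 an ideal, M a finitely generated A-module, c ≥ 1 an integer, and a ∈ 𝔮^c. Suppose there exists an integer N such that ⨆_{l≥0} (𝔮^n(𝔮^c)^lM :_M a^l) = 𝔮^nM for all n ≥ N. Then (0 :_M a) = 0, and (𝔮^{n+c}M :_M a) = 𝔮^nM for all n ≥ N. -/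
/-- Over a Noetherian local ring with `𝔮 ⊆ 𝔪`: if `(𝔮^nM)^{aA} = 𝔮^nM` for all `n ≥ N`,
then `(0 :_M a) = 0` and `(𝔮^{n+c}M :_M a) = 𝔮^nM` for all `n ≥ N`. -/
theorem regular_and_colon_stable_of_saturation_eq
    {A M : Type} [CommRing A] [IsNoetherianRing A] [IsLocalRing A]
    [AddCommGroup M] [Module A M] [Module.Finite A M]
    (𝔮 : Ideal A) (h𝔮 : 𝔮 ≤ IsLocalRing.maximalIdeal A)
    (c : ℕ) (hc : 1 ≤ c) (a : A) (ha : a ∈ 𝔮 ^ c) (N : ℕ)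
    (h : ∀ n ≥ N,
      (⨆ l : ℕ, Submodule.comap ((a ^ l) • (LinearMap.id : M →ₗ[A] M))
        ((𝔮 ^ n * (𝔮 ^ c) ^ l) • ⊤)) = 𝔮 ^ n • ⊤) :
    LinearMap.ker (a • (LinearMap.id : M →ₗ[A] M)) = ⊥ ∧
    ∀ n ≥ N,
      Submodule.comap (a • (LinearMap.id : M →ₗ[A] M)) (𝔮 ^ (n + c) • ⊤) = 𝔮 ^ n • ⊤ := by
  have h𝔮ne : 𝔮 ≠ ⊤ := fun e => (IsLocalRing.maximalIdeal.isMaximal A).ne_top (top_le_iff.mp (e ▸ h𝔮))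
  constructor
  · rw [eq_bot_iff]
    intro m hm
    have hm0 : a • m = 0 := hm
    have key : ∀ n, m ∈ (𝔮 ^ n • ⊤ : Submodule A M) := by
      intro n
      have hNn : m ∈ (𝔮 ^ (N + n) • ⊤ : Submodule A M) := by
        rw [← h (N + n) (Nat.le_add_right _ _)]
        refine Submodule.mem_iSup_of_mem 1 ?_
        simp only [Submodule.mem_comap, LinearMap.smul_apply, LinearMap.id_apply, pow_one, hm0]
        exact Submodule.zero_mem _
      exact Submodule.smul_mono_left (Ideal.pow_le_pow_right (Nat.le_add_left _ _)) hNn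
    have := Ideal.iInf_pow_smul_eq_bot_of_isLocalRing (I := 𝔮) (M := M) h𝔮ne
    have hmem : m ∈ (⨅ i : ℕ, 𝔮 ^ i • ⊤ : Submodule A M) := Submodule.mem_iInf _ |>.mpr key
    rw [this] at hmem
    exact hmem
  · intro n hn
    apply le_antisymm
    · intro m hm
      simp only [Submodule.mem_comap, LinearMap.smul_apply, LinearMap.id_apply] at hm
      rw [← h n hn]
      refine Submodule.mem_iSup_of_mem 1 ?_
      simp only [Submodule.mem_comap, LinearMap.smul_apply, LinearMap.id_apply, pow_one]
      rw [← pow_add]; exact hm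
    · intro m hm
      simp only [Submodule.mem_comap, LinearMap.smul_apply, LinearMap.id_apply]
      rw [pow_add, mul_comm, ← smul_eq_mul, Submodule.smul_assoc]
      exact Submodule.smul_mem_smul ha hm
end

section
/- Let (A, 𝔪) be a commutative Noetherian local ring, 𝔮 ⊆ 𝔪 an ideal, M a finitely generated A-module, c ≥ 1 an integer, and a ∈ 𝔮^c a nonzerodivisor on M such that the quotient module M/aM has finite length. Suppose there exist integers l, k such that (𝔮^{n+c}M :_M a) ∩ 𝔮^lM = 𝔮^nM for all n ≥ k. Then there exists an integer N such that 𝔮^{n+c}M = a·(𝔮^nM) for all n ≥ N. -/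
/-- Over a Noetherian local ring, if `a ∈ 𝔮^c` is a nonzerodivisor on `M` with `M/aM` of
finite length, and `(𝔮^{n+c}M :_M a) ∩ 𝔮^lM = 𝔮^nM` for all `n ≥ k`, then
`𝔮^{n+c}M = a·(𝔮^nM)` for all large `n`. -/
theorem pow_smul_eq_smul_pow_smul_of_superficial
    {A M : Type} [CommRing A] [IsNoetherianRing A] [IsLocalRing A]
    [AddCommGroup M] [Module A M] [Module.Finite A M]
    (𝔮 : Ideal A) (h𝔮 : 𝔮 ≤ IsLocalRing.maximalIdeal A)
    (c : ℕ) (hc : 1 ≤ c) (a : A) (ha : a ∈ 𝔮 ^ c)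
    (hreg : ∀ m : M, a • m = 0 → m = 0)
    (hfl : IsFiniteLength A
      (M ⧸ Submodule.map (a • (LinearMap.id : M →ₗ[A] M)) (⊤ : Submodule A M)))
    (l k : ℕ)
    (h : ∀ n ≥ k,
      Submodule.comap (a • (LinearMap.id : M →ₗ[A] M)) (𝔮 ^ (n + c) • ⊤) ⊓
        (𝔮 ^ l • ⊤) = 𝔮 ^ n • ⊤) :
    ∃ N : ℕ, ∀ n ≥ N,
      𝔮 ^ (n + c) • (⊤ : Submodule A M) =
        Submodule.map (a • (LinearMap.id : M →ₗ[A] M)) (𝔮 ^ n • ⊤) := by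
  classical
  set f : M →ₗ[A] M := a • (LinearMap.id : M →ₗ[A] M) with hf
  set 𝔪 : Ideal A := IsLocalRing.maximalIdeal A with h𝔪
  set Nsub : Submodule A M := Submodule.map f ⊤ with hN
  -- Step 1: a power of 𝔪 kills M/aM
  set Q := M ⧸ Nsub with hQ
  obtain ⟨hnoeth, hart⟩ := isFiniteLength_iff_isNoetherian_isArtinian.mp hfl
  -- stabilization of 𝔪^n • ⊤ in Q
  have hanti : ∀ n m : ℕ, n ≤ m →
      (𝔪 ^ m • ⊤ : Submodule A Q) ≤ 𝔪 ^ n • ⊤ :=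
    fun n m hnm => Submodule.smul_mono_left (Ideal.pow_le_pow_right hnm)
  obtain ⟨s, hs⟩ := IsArtinian.monotone_stabilizes (R := A) (M := Q)
    ⟨fun n => OrderDual.toDual ((𝔪 ^ n • ⊤ : Submodule A Q)),
     fun n m hnm => hanti n m hnm⟩
  have hstab : (𝔪 ^ s • ⊤ : Submodule A Q) = 𝔪 ^ (s + 1) • ⊤ := hs (s+1) (by omega)
  have hbot : (𝔪 ^ s • ⊤ : Submodule A Q) = ⊥ := by
    refine Submodule.eq_bot_of_le_smul_of_le_jacobson_bot 𝔪 _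
      (IsNoetherian.noetherian _) ?_ ?_
    · have h2 : (𝔪 ^ (s + 1) • ⊤ : Submodule A Q) = 𝔪 • (𝔪 ^ s • ⊤) := by
        rw [pow_succ, mul_comm, mul_smul]
      exact le_of_eq (hstab.trans h2)
    · rw [IsLocalRing.jacobson_eq_maximalIdeal ⊥ bot_ne_top]
  -- pull back: 𝔪^s M ⊆ aM
  have hkill : (𝔪 ^ s • ⊤ : Submodule A M) ≤ Nsub := by
    intro x hx
    have : Nsub.mkQ x ∈ (𝔪 ^ s • ⊤ : Submodule A Q) := by
      rw [← Submodule.range_mkQ Nsub, ← Submodule.map_top, ← Submodule.map_smul'']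
      exact Submodule.mem_map_of_mem hx
    rw [hbot, Submodule.mem_bot] at this
    simpa [Submodule.Quotient.mk_eq_zero] using this
  -- Step 2: Artin-Rees
  obtain ⟨r, hr⟩ := Ideal.exists_pow_inf_eq_pow_smul 𝔮 Nsub
  refine ⟨max (max k (r + l)) s, fun n hn => ?_⟩
  have hnk : k ≤ n := le_trans (le_trans (le_max_left _ _) (le_max_left _ _)) hn
  have hnrl : r + l ≤ n := le_trans (le_trans (le_max_right _ _) (le_max_left _ _)) hn
  have hns : s ≤ n := le_trans (le_max_right _ _) hn
  apply le_antisymm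
  · -- hard direction
    intro x hx
    -- x ∈ 𝔮^{n+c}M ∩ aM
    have hxN : x ∈ Nsub := by
      apply hkill
      refine Submodule.smul_mono_left ?_ hx
      calc 𝔮 ^ (n + c) ≤ 𝔪 ^ (n + c) := Ideal.pow_right_mono h𝔮 _
        _ ≤ 𝔪 ^ s := Ideal.pow_le_pow_right (by omega)
    have hx2 : x ∈ 𝔮 ^ (n + c - r) • Nsub := by
      have := hr (n + c) (by omega)
      have hmem : x ∈ (𝔮 ^ (n + c) • ⊤ ⊓ Nsub : Submodule A M) := ⟨hx, hxN⟩
      rw [this] at hmem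
      exact Submodule.smul_mono le_rfl inf_le_right hmem
    rw [hN, ← Submodule.map_smul''] at hx2
    obtain ⟨m, hm, hma⟩ := hx2
    -- m ∈ 𝔮^l M and a • m ∈ 𝔮^{n+c} M
    have hml : m ∈ (𝔮 ^ l • ⊤ : Submodule A M) :=
      Submodule.smul_mono_left (Ideal.pow_le_pow_right (by omega)) hm
    have hmc : m ∈ Submodule.comap f (𝔮 ^ (n + c) • ⊤ : Submodule A M) := by
      rw [Submodule.mem_comap, hma]
      exact hx
    have : m ∈ (𝔮 ^ n • ⊤ : Submodule A M) := by
      rw [← h n hnk]; exact ⟨hmc, hml⟩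
    exact ⟨m, this, hma⟩
  · -- easy direction
    rintro x ⟨m, hm, rfl⟩
    have : f m = a • m := by simp [hf]
    rw [this]
    have := Submodule.smul_mem_smul ha hm
    rwa [smul_smul, ← pow_add, Nat.add_comm c n] at this
end
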